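/- Let π' be a permutation of {1,…,n} different from the identity, and let x ∈ ℝ^n have nondecreasing coordinates. Then there exists an elementary transposition τ (swapping two consecutive values) such that π := τ ∘ π' has strictly fewer inversions than π' and ‖x - x^π‖₂ ≤ ‖x - x^{π'}‖₂, where x^σ denotes the mirror of x under σ. -/

import Mathlib

/-- The mirror of `x` in the cell of the permutation `σ`, defined by `(x^σ)_{σ(i)} = x_i`. -/
noncomputable def mirror {n : ℕ} (x : EuclideanSpace ℝ (Fin n)) (σ : Equiv.Perm (Fin n)) :
    EuclideanSpace ℝ (Fin n) :=
  WithLp.toLp 2 fun i => x (σ.symm i)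

/-- Number of inversions of a permutation: pairs `(i,j)` with `i < j` and `σ i > σ j`. -/
def invCount {n : ℕ} (σ : Equiv.Perm (Fin n)) : ℕ :=
  (Finset.univ.filter fun p : Fin n × Fin n => p.1 < p.2 ∧ σ p.2 < σ p.1).card

/-- A nonidentity permutation's inverse has a descent. -/
lemma exists_descent {n : ℕ} (ρ : Equiv.Perm (Fin n)) (hρ : ρ ≠ 1) :
    ∃ (k : ℕ) (hk : k + 1 < n), ρ ⟨k + 1, hk⟩ < ρ ⟨k, Nat.lt_of_succ_lt hk⟩ := by
  by_contra h
  push_neg at h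
  apply hρ
  have hmono : Monotone ρ := by
    rcases n with _ | m
    · exact fun a => absurd a.2 (by omega)
    · rw [Fin.monotone_iff_le_succ]
      intro i
      have := h i.val (by omega)
      have h1 : (⟨i.val, by omega⟩ : Fin (m + 1)) = Fin.castSucc i := rfl
      have h2 : (⟨i.val + 1, by omega⟩ : Fin (m + 1)) = i.succ := rfl
      rw [h1, h2] at this
      exact this
  have hsm : StrictMono ρ := hmono.strictMono_of_injective ρ.injective
  have hwf : WellFoundedLT (Fin n) := inferInstance
  have hiff := @StrictMono.range_inj (Fin n) (Fin n) _ _ hwf _ _ hsm strictMono_id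
  have hid : (ρ : Fin n → Fin n) = id := by
    rw [← hiff]
    simp [ρ.surjective.range_eq]
  exact Equiv.ext fun i => congrFun hid i

lemma swap_lt_lemma {n : ℕ} (kf kf1 a b : Fin n) (hkk : kf < kf1)
    (hcons : (kf1 : ℕ) = (kf : ℕ) + 1)
    (h : Equiv.swap kf kf1 a < Equiv.swap kf kf1 b) :
    a < b ∨ (a = kf1 ∧ b = kf) := by
  rw [Equiv.swap_apply_def, Equiv.swap_apply_def] at h
  split_ifs at h <;>
    · simp only [Fin.lt_def, Fin.ext_iff] at *
      omega

theorem stmt6 {n : ℕ} (x : EuclideanSpace ℝ (Fin n)) (hx : Monotone fun i => x i)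
    (π' : Equiv.Perm (Fin n)) (hπ' : π' ≠ 1) :
    ∃ (k : ℕ) (hk : k + 1 < n),
      invCount (Equiv.swap (⟨k, Nat.lt_of_succ_lt hk⟩ : Fin n) (⟨k + 1, hk⟩ : Fin n) * π')
          < invCount π' ∧
        ‖x - mirror x (Equiv.swap (⟨k, Nat.lt_of_succ_lt hk⟩ : Fin n) (⟨k + 1, hk⟩ : Fin n) * π')‖
          ≤ ‖x - mirror x π'‖ := by
  have hρ : π'⁻¹ ≠ 1 := by simpa using hπ'
  obtain ⟨k, hk, hdesc⟩ := exists_descent π'⁻¹ hρ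
  refine ⟨k, hk, ?_, ?_⟩
  · -- inversion count decreases
    set kf : Fin n := ⟨k, Nat.lt_of_succ_lt hk⟩
    set kf1 : Fin n := ⟨k + 1, hk⟩
    set τ : Equiv.Perm (Fin n) := Equiv.swap kf kf1
    have hkk : kf < kf1 := by simp [kf, kf1, Fin.lt_def]
    set i0 : Fin n := π'⁻¹ kf1
    set j0 : Fin n := π'⁻¹ kf
    have hij : i0 < j0 := hdesc
    unfold invCount
    apply Finset.card_lt_card
    constructor
    · intro p hp
      simp only [Finset.mem_filter, Finset.mem_univ, true_and] at hp ⊢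
      obtain ⟨h1, h2⟩ := hp
      refine ⟨h1, ?_⟩
      rcases swap_lt_lemma kf kf1 (π' p.2) (π' p.1) hkk rfl h2 with h | ⟨ha, hb⟩
      · exact h
      · exfalso
        have h2' : p.2 = i0 := by apply π'.injective; simp [i0, ha]
        have h1' : p.1 = j0 := by apply π'.injective; simp [j0, hb]
        rw [h1', h2'] at h1
        exact absurd h1 (not_lt.2 hij.le)
    · intro hsub
      have hmem : (i0, j0) ∈ Finset.univ.filter
          fun p : Fin n × Fin n => p.1 < p.2 ∧ π' p.2 < π' p.1 := by
        simp only [Finset.mem_filter, Finset.mem_univ, true_and]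
        refine ⟨hij, ?_⟩
        show π' j0 < π' i0
        simpa [i0, j0] using hkk
      have := hsub hmem
      simp only [Finset.mem_filter, Finset.mem_univ, true_and] at this
      obtain ⟨-, h2⟩ := this
      simp only [Equiv.Perm.mul_apply, i0, j0, Equiv.Perm.inv_def, Equiv.apply_symm_apply, τ] at h2
      rw [Equiv.swap_apply_left, Equiv.swap_apply_right] at h2
      exact absurd h2 (not_lt.2 hkk.le)
  · -- norm inequality
    set kf : Fin n := ⟨k, Nat.lt_of_succ_lt hk⟩
    set kf1 : Fin n := ⟨k + 1, hk⟩
    set τ : Equiv.Perm (Fin n) := Equiv.swap kf kf1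
    have hkk : kf ≤ kf1 := by simp [kf, kf1, Fin.le_def]
    have hτsymm : ∀ i, (τ * π').symm i = π'.symm (τ i) := by
      intro i
      simp only [Equiv.Perm.mul_def, Equiv.symm_trans_apply, τ, Equiv.symm_swap]
    rw [EuclideanSpace.norm_eq, EuclideanSpace.norm_eq]
    apply Real.sqrt_le_sqrt
    have happly : ∀ (σ : Equiv.Perm (Fin n)) i,
        (x - mirror x σ) i = x i - x (σ.symm i) := by
      intro σ i
      simp [mirror, PiLp.sub_apply]
    simp only [happly, Real.norm_eq_abs, sq_abs]
    -- reduce to inner product comparison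
    have hsq : ∀ (σ : Equiv.Perm (Fin n)),
        ∑ i, (x i - x (σ.symm i)) ^ 2
          = 2 * ∑ i, x i ^ 2 - 2 * ∑ i, x i * x (σ.symm i) := by
      intro σ
      have h1 : ∑ i, x (σ.symm i) ^ 2 = ∑ i, x i ^ 2 :=
        Equiv.sum_comp σ.symm (fun i => x i ^ 2)
      calc ∑ i, (x i - x (σ.symm i)) ^ 2
          = ∑ i, (x i ^ 2 - 2 * (x i * x (σ.symm i)) + x (σ.symm i) ^ 2) := by
            apply Finset.sum_congr rfl; intros; ring
        _ = ∑ i, x i ^ 2 - 2 * ∑ i, x i * x (σ.symm i) + ∑ i, x (σ.symm i) ^ 2 := by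
            rw [Finset.sum_add_distrib, Finset.sum_sub_distrib, Finset.mul_sum]
        _ = 2 * ∑ i, x i ^ 2 - 2 * ∑ i, x i * x (σ.symm i) := by rw [h1]; ring
    rw [hsq, hsq]
    have hkey : ∑ i, x i * x (π'.symm i) ≤ ∑ i, x i * x ((τ * π').symm i) := by
      have hre : ∑ i, x i * x ((τ * π').symm i) = ∑ i, x (τ i) * x (π'.symm i) := by
        rw [← Equiv.sum_comp τ (fun i => x (τ i) * x (π'.symm i))]
        apply Finset.sum_congr rfl
        intro i _
        have ht : τ (τ i) = i := by simp [τ, Equiv.swap_apply_self]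
        rw [ht, hτsymm]
      rw [hre, ← sub_nonneg, ← Finset.sum_sub_distrib]
      have hvanish : ∀ i ∈ Finset.univ, i ∉ ({kf, kf1} : Finset (Fin n)) →
          x (τ i) * x (π'.symm i) - x i * x (π'.symm i) = 0 := by
        intro i _ hi
        simp only [Finset.mem_insert, Finset.mem_singleton, not_or] at hi
        rw [Equiv.swap_apply_of_ne_of_ne hi.1 hi.2]
        ring
      rw [← Finset.sum_subset (Finset.subset_univ ({kf, kf1} : Finset (Fin n))) hvanish]
      have hne : kf ≠ kf1 := by simp [kf, kf1, Fin.ext_iff]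
      rw [Finset.sum_insert (by simpa using hne), Finset.sum_singleton]
      have e1 : τ kf = kf1 := Equiv.swap_apply_left kf kf1
      have e2 : τ kf1 = kf := Equiv.swap_apply_right kf kf1
      rw [e1, e2]
      have hx1 : x kf ≤ x kf1 := hx hkk
      have hx2 : x (π'.symm kf1) ≤ x (π'.symm kf) := hx (le_of_lt hdesc)
      nlinarith
    linarith
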